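/- Let G be a subgroup of S_n and let B̃ = (b_{ij}) be a 2n×n integer matrix such that σB̃ = B̃ for all σ ∈ G and B̃ is admissible (b_{ij} = 0 whenever i, j ∈ {1,…,n} lie in a common G-orbit). Let Ω be a G-orbit of {1,…,n} and let μ_Ω(B̃) be the orbit mutation of B̃ at Ω. Then σ·μ_Ω(B̃) = μ_Ω(B̃) for all σ ∈ G; that is, G-invariance of the exchange matrix is preserved under orbit mutation. -/

import Mathlib

/-- Matrix mutation in direction `k` of a `2n × n` integer matrix, with rows indexed
by `Fin n ⊕ Fin n` (the `k`-th row being `Sum.inl k`). -/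
def mutT {n : ℕ} (B : Matrix (Fin n ⊕ Fin n) (Fin n) ℤ) (k : Fin n) :
    Matrix (Fin n ⊕ Fin n) (Fin n) ℤ :=
  Matrix.of fun i j =>
    if i = Sum.inl k ∨ j = k then -B i j
    else B i j + Int.sign (B i k) * max (B i k * B (Sum.inl k) j) 0

/-- `G`-invariance of a `2n × n` matrix: `σB̃ = B̃` for all `σ ∈ G`, where `σ` acts on
rows through `σ̃ = Sum.map σ σ` and on columns through `σ`. -/
def GInvT {n : ℕ} (G : Subgroup (Equiv.Perm (Fin n)))
    (B : Matrix (Fin n ⊕ Fin n) (Fin n) ℤ) : Prop :=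
  ∀ σ ∈ G, ∀ i j, B (Sum.map (⇑σ) (⇑σ) i) (σ j) = B i j

section Aux
variable {n : ℕ}

def AdmOn (S : Set (Fin n)) (B : Matrix (Fin n ⊕ Fin n) (Fin n) ℤ) : Prop :=
  ∀ a ∈ S, ∀ b ∈ S, B (Sum.inl a) b = 0

lemma admOn_mutT {S : Set (Fin n)} {B : Matrix (Fin n ⊕ Fin n) (Fin n) ℤ}
    (hB : AdmOn S B) {x : Fin n} (hx : x ∈ S) : AdmOn S (mutT B x) := by
  intro a ha b hb
  simp only [mutT, Matrix.of_apply]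
  by_cases h : Sum.inl a = (Sum.inl x : Fin n ⊕ Fin n) ∨ b = x
  · rw [if_pos h, hB a ha b hb, neg_zero]
  · rw [if_neg h, hB a ha b hb, hB a ha x hx]; simp

lemma mutT_comm {S : Set (Fin n)} {B : Matrix (Fin n ⊕ Fin n) (Fin n) ℤ}
    (hB : AdmOn S B) {x y : Fin n} (hx : x ∈ S) (hy : y ∈ S) :
    mutT (mutT B x) y = mutT (mutT B y) x := by
  rcases eq_or_ne x y with rfl | hxy
  · rfl
  have hxy0 : B (Sum.inl x) y = 0 := hB x hx y hy
  have hyx0 : B (Sum.inl y) x = 0 := hB y hy x hx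
  have hyx : ¬ y = x := fun h => hxy h.symm
  funext a b
  simp only [mutT, Matrix.of_apply]
  by_cases hax : a = (Sum.inl x : Fin n ⊕ Fin n) <;>
  by_cases hay : a = (Sum.inl y : Fin n ⊕ Fin n) <;>
  by_cases hbx : b = x <;>
  by_cases hby : b = y <;>
  simp_all <;> ring

end Aux

section Aux2
variable {n : ℕ}

/-- Pullback of a `2n × n` matrix along a permutation. -/
def pb (σ : Equiv.Perm (Fin n)) (B : Matrix (Fin n ⊕ Fin n) (Fin n) ℤ) :
    Matrix (Fin n ⊕ Fin n) (Fin n) ℤ :=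
  Matrix.of fun i j => B (Sum.map (⇑σ) (⇑σ) i) (σ j)

lemma pb_mutT (σ : Equiv.Perm (Fin n)) (B : Matrix (Fin n ⊕ Fin n) (Fin n) ℤ) (k : Fin n) :
    pb σ (mutT B k) = mutT (pb σ B) (σ⁻¹ k) := by
  funext i j
  simp only [pb, mutT, Matrix.of_apply]
  have h1 : (Sum.map (⇑σ) (⇑σ) i = Sum.inl k) ↔ i = Sum.inl (σ⁻¹ k) := by
    cases i with
    | inl a => simp [Equiv.eq_symm_apply, Equiv.Perm.inv_def]
    | inr a => simp
  have h2 : (σ j = k) ↔ j = σ⁻¹ k := by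
    simp [Equiv.eq_symm_apply, Equiv.Perm.inv_def]
  have h3 : σ (σ⁻¹ k) = k := Equiv.apply_symm_apply σ k
  have h4 : (Sum.map (⇑σ) (⇑σ) (Sum.inl (σ⁻¹ k)) : Fin n ⊕ Fin n) = Sum.inl k := by
    simp [h3]
  simp only [h3, h4, h1, h2]

lemma pb_foldl (σ : Equiv.Perm (Fin n)) :
    ∀ (l : List (Fin n)) (B : Matrix (Fin n ⊕ Fin n) (Fin n) ℤ),
      pb σ (l.foldl mutT B) = (l.map (fun x => σ⁻¹ x)).foldl mutT (pb σ B)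
  | [], B => rfl
  | x :: l, B => by
      simp only [List.foldl_cons, List.map_cons]
      rw [pb_foldl σ l (mutT B x), pb_mutT]

lemma foldl_mutT_perm {S : Set (Fin n)} {l1 l2 : List (Fin n)} (hp : l1.Perm l2) :
    (∀ j ∈ l1, j ∈ S) → ∀ B, AdmOn S B → l1.foldl mutT B = l2.foldl mutT B := by
  induction hp with
  | nil => intro _ B _; rfl
  | cons x h ih =>
      intro hl B hB
      simp only [List.foldl_cons]
      exact ih (fun j hj => hl j (List.mem_cons_of_mem _ hj)) _
        (admOn_mutT hB (hl x (List.mem_cons_self ..)))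
  | swap x y l =>
      intro hl B hB
      simp only [List.foldl_cons]
      rw [mutT_comm hB (hl y (by simp)) (hl x (by simp))]
  | trans h1 h2 ih1 ih2 =>
      intro hl B hB
      rw [ih1 hl B hB, ih2 (fun j hj => hl j (h1.mem_iff.mpr hj)) B hB]

end Aux2

/-- `G`-invariance of an admissible `2n × n` exchange matrix is preserved under
orbit mutation (the orbit mutation `μ_Ω` at the `G`-orbit `Ω` of `k` being the
composition of the mutations `μ_i` over an enumeration `l` of `Ω`). -/
theorem stmt_6 {n : ℕ} (G : Subgroup (Equiv.Perm (Fin n)))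
    (B : Matrix (Fin n ⊕ Fin n) (Fin n) ℤ)
    (hinv : GInvT G B)
    (hadm : ∀ i j : Fin n, (∃ σ ∈ G, σ i = j) → B (Sum.inl i) j = 0)
    (k : Fin n) (l : List (Fin n)) (hnd : l.Nodup)
    (hl : ∀ j, j ∈ l ↔ ∃ σ ∈ G, σ k = j) :
    GInvT G (l.foldl mutT B) := by
  set S : Set (Fin n) := {j | ∃ σ ∈ G, σ k = j} with hS
  have hlS : ∀ j ∈ l, j ∈ S := fun j hj => (hl j).1 hj
  have hadmS : AdmOn S B := by
    rintro a ⟨σa, hσa, rfl⟩ b ⟨σb, hσb, rfl⟩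
    exact hadm _ _ ⟨σb * σa⁻¹, G.mul_mem hσb (G.inv_mem hσa), by simp⟩
  intro σ hσ i j
  have hpb : pb σ B = B := by funext i j; exact hinv σ hσ i j
  have h1 : pb σ (l.foldl mutT B) = (l.map (fun x => σ⁻¹ x)).foldl mutT B := by
    rw [pb_foldl, hpb]
  have hperm : (l.map (fun x => σ⁻¹ x)).Perm l := by
    rw [List.perm_ext_iff_of_nodup (hnd.map (Equiv.injective σ⁻¹)) hnd]
    intro a
    simp only [List.mem_map]
    constructor
    · rintro ⟨b, hb, rfl⟩
      rw [hl] at hb ⊢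
      obtain ⟨τ, hτ, rfl⟩ := hb
      exact ⟨σ⁻¹ * τ, G.mul_mem (G.inv_mem hσ) hτ, rfl⟩
    · intro ha
      refine ⟨σ a, ?_, by simp⟩
      rw [hl]
      obtain ⟨τ, hτ, rfl⟩ := (hl a).1 ha
      exact ⟨σ * τ, G.mul_mem hσ hτ, rfl⟩
  have h2 : (l.map (fun x => σ⁻¹ x)).foldl mutT B = l.foldl mutT B :=
    foldl_mutT_perm hperm (fun j hj => hlS j (hperm.mem_iff.mp hj)) B hadmS
  have h3 := congrFun (congrFun (h1.trans h2) i) j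
  simpa [pb] using h3
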